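/- arXiv:2006.05852 — 3 statements merged into one kernel-verified Lean document; each statement's English description precedes it below -/
import Mathlib

section
/- Hermitian S-lemma (S-procedure with one constraint, complex case). Let n ≥ 1, let A and B be n×n complex Hermitian matrices, let b, d ∈ ℂⁿ, and let c, f ∈ ℝ. Define the real-valued quadratic functions g(x) = xᴴAx + 2·Re(bᴴx) + c and φ(x) = xᴴBx + 2·Re(dᴴx) + f for x ∈ ℂⁿ (the terms xᴴAx and xᴴBx are real because A and B are Hermitian). Assume there exists x₀ ∈ ℂⁿ with g(x₀) > 0 (Slater condition). Then the implication (for all x ∈ ℂⁿ, g(x) ≥ 0 implies φ(x) ≥ 0) holds if and only if there exists λ ≥ 0 such that the (n+1)×(n+1) Hermitian block matrix [[B − λA, d − λb], [(d − λb)ᴴ, f − λc]] is positive semidefinite. -/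
open Matrix ComplexOrder

namespace SLemmaAux

variable {ι : Type*} [Fintype ι] [DecidableEq ι]

noncomputable def Qf (H : Matrix ι ι ℂ) (y : ι → ℂ) : ℝ := (star y ⬝ᵥ H *ᵥ y).re

lemma cross_conj {H : Matrix ι ι ℂ} (hH : H.IsHermitian) (u v : ι → ℂ) :
    star v ⬝ᵥ H *ᵥ u = star (star u ⬝ᵥ H *ᵥ v) := by
  rw [dotProduct_mulVec]
  conv_lhs => rw [← hH]
  rw [← star_mulVec, star_dotProduct]

lemma form_real {H : Matrix ι ι ℂ} (hH : H.IsHermitian) (y : ι → ℂ) :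
    star y ⬝ᵥ H *ᵥ y = ((Qf H y : ℝ) : ℂ) := by
  have h := cross_conj hH y y
  have him : (star y ⬝ᵥ H *ᵥ y).im = 0 := by
    have := congrArg Complex.im h
    simp only [Complex.star_def, Complex.conj_im] at this
    linarith
  exact Complex.ext (by simp [Qf]) (by simp [him])

lemma cross_smul (H : Matrix ι ι ℂ) (a b : ℂ) (x y : ι → ℂ) :
    star (a • x) ⬝ᵥ H *ᵥ (b • y) = star a * b * (star x ⬝ᵥ H *ᵥ y) := by
  rw [star_smul, mulVec_smul, smul_dotProduct, dotProduct_smul]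
  simp [smul_eq_mul]; ring

lemma Qf_smul (H : Matrix ι ι ℂ) (a : ℂ) (y : ι → ℂ) :
    Qf H (a • y) = Complex.normSq a * Qf H y := by
  unfold Qf
  rw [cross_smul]
  have : star a * a = (Complex.normSq a : ℂ) := by
    rw [Complex.star_def, mul_comm, Complex.mul_conj]
  rw [this, Complex.re_ofReal_mul]

lemma Qf_add {H : Matrix ι ι ℂ} (hH : H.IsHermitian) (x y : ι → ℂ) :
    Qf H (x + y) = Qf H x + Qf H y + 2 * (star x ⬝ᵥ H *ᵥ y).re := by
  unfold Qf
  rw [star_add, mulVec_add, add_dotProduct, dotProduct_add, dotProduct_add]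
  have h := cross_conj hH x y
  simp only [Complex.add_re]
  rw [h]
  simp [Complex.star_def]
  ring

lemma Qf_expand {H : Matrix ι ι ℂ} (hH : H.IsHermitian) (a b : ℂ) (x y : ι → ℂ) :
    Qf H (a • x + b • y) = Complex.normSq a * Qf H x + Complex.normSq b * Qf H y
      + 2 * (star a * b * (star x ⬝ᵥ H *ᵥ y)).re := by
  rw [Qf_add hH, Qf_smul, Qf_smul, cross_smul]

lemma Qf_matrix_sub (P Q : Matrix ι ι ℂ) (y : ι → ℂ) :
    Qf (P - Q) y = Qf P y - Qf Q y := by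
  unfold Qf
  rw [sub_mulVec, dotProduct_sub, Complex.sub_re]

lemma Qf_matrix_add (P Q : Matrix ι ι ℂ) (y : ι → ℂ) :
    Qf (P + Q) y = Qf P y + Qf Q y := by
  unfold Qf
  rw [add_mulVec, dotProduct_add, Complex.add_re]

lemma Qf_matrix_smul (r : ℝ) (H : Matrix ι ι ℂ) (y : ι → ℂ) :
    Qf ((r : ℂ) • H) y = r * Qf H y := by
  unfold Qf
  rw [smul_mulVec, dotProduct_smul, smul_eq_mul, Complex.re_ofReal_mul]

lemma Qf_one (y : ι → ℂ) : Qf (1 : Matrix ι ι ℂ) y = ∑ i, Complex.normSq (y i) := by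
  unfold Qf
  rw [one_mulVec, dotProduct, Complex.re_sum]
  congr 1; funext i
  simp [Complex.normSq_apply, Complex.mul_re]

lemma Qf_one_nonneg (y : ι → ℂ) : 0 ≤ Qf (1 : Matrix ι ι ℂ) y := by
  rw [Qf_one]
  exact Finset.sum_nonneg fun i _ => Complex.normSq_nonneg _

lemma eq_zero_of_Qf_one (y : ι → ℂ) (h : Qf (1 : Matrix ι ι ℂ) y = 0) : y = 0 := by
  rw [Qf_one] at h
  funext i
  have := (Finset.sum_eq_zero_iff_of_nonneg (fun i _ => Complex.normSq_nonneg (y i))).mp h i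
    (Finset.mem_univ i)
  simpa using Complex.normSq_eq_zero.mp this

lemma herm_smul_real (r : ℝ) {H : Matrix ι ι ℂ} (hH : H.IsHermitian) :
    ((r : ℂ) • H).IsHermitian := by
  unfold Matrix.IsHermitian
  rw [conjTranspose_smul, hH]
  congr 1
  simp

lemma cross_smul_left (H : Matrix ι ι ℂ) (a : ℂ) (x y : ι → ℂ) :
    star (a • x) ⬝ᵥ H *ᵥ y = star a * (star x ⬝ᵥ H *ᵥ y) := by
  rw [star_smul, smul_dotProduct]
  simp [smul_eq_mul]

lemma Qf_expand_real {P : Matrix ι ι ℂ} (hP : P.IsHermitian) (a b : ℝ) (x y : ι → ℂ) :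
    Qf P ((a : ℂ) • x + (b : ℂ) • y)
      = a ^ 2 * Qf P x + b ^ 2 * Qf P y + 2 * a * b * (star x ⬝ᵥ P *ᵥ y).re := by
  rw [Qf_expand hP]
  have h1 : (star (a : ℂ) * (b : ℂ) * (star x ⬝ᵥ P *ᵥ y)).re
      = a * b * (star x ⬝ᵥ P *ᵥ y).re := by
    rw [Complex.star_def, Complex.conj_ofReal, ← Complex.ofReal_mul, Complex.re_ofReal_mul]
  rw [h1, Complex.normSq_ofReal, Complex.normSq_ofReal]
  ring

lemma exists_phase (q : ℂ) : ∃ ζ : ℂ, Complex.normSq ζ = 1 ∧ (star ζ * q).re = 0 := by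
  rcases eq_or_ne q 0 with hq | hq
  · exact ⟨1, by simp, by simp [hq]⟩
  · have ha : ‖q‖ ≠ 0 := norm_ne_zero_iff.mpr hq
    refine ⟨Complex.I * q * (((‖q‖)⁻¹ : ℝ) : ℂ), ?_, ?_⟩
    · rw [Complex.normSq_mul, Complex.normSq_mul, Complex.normSq_I, Complex.normSq_ofReal,
        ← Complex.sq_norm]
      field_simp
    · simp only [Complex.star_def, _root_.map_mul, Complex.conj_I, Complex.conj_ofReal]
      simp only [Complex.mul_re, Complex.mul_im, Complex.I_re, Complex.I_im,
        Complex.ofReal_re, Complex.ofReal_im, Complex.conj_re, Complex.conj_im,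
        Complex.neg_re, Complex.neg_im]
      ring

lemma seg0 {H K : Matrix ι ι ℂ} (hH : H.IsHermitian) (hK : K.IsHermitian)
    (u v : ι → ℂ) (hu1 : Qf 1 u = 1) (hv1 : Qf 1 v = 1)
    (hHu : Qf H u = 0) (hKu : Qf K u = 0) (hHv : Qf H v = 1) (hKv : Qf K v = 0)
    {t : ℝ} (ht : t ∈ Set.Icc (0:ℝ) 1) :
    ∃ w, Qf 1 w = 1 ∧ Qf H w = t ∧ Qf K w = 0 := by
  obtain ⟨ζ, hζ1, hζ2⟩ := exists_phase (star u ⬝ᵥ K *ᵥ v)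
  set u' : ι → ℂ := ζ • u with hu'def
  have hu'1 : Qf 1 u' = 1 := by rw [Qf_smul, hζ1, hu1, one_mul]
  have hHu' : Qf H u' = 0 := by rw [Qf_smul, hHu, mul_zero]
  have hKu' : Qf K u' = 0 := by rw [Qf_smul, hKu, mul_zero]
  have hKcross : (star u' ⬝ᵥ K *ᵥ v).re = 0 := by
    rw [hu'def, cross_smul_left]; exact hζ2
  set rH : ℝ := (star u' ⬝ᵥ H *ᵥ v).re with hrH
  set e : ℝ := (star u' ⬝ᵥ (1 : Matrix ι ι ℂ) *ᵥ v).re with he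
  set z : ℝ → (ι → ℂ) := fun s => ((1 - s : ℝ) : ℂ) • u' + ((s : ℝ) : ℂ) • v with hz
  set D : ℝ → ℝ := fun s => (1 - s) ^ 2 + s ^ 2 + 2 * (1 - s) * s * e with hD
  set F : ℝ → ℝ := fun s => s ^ 2 + 2 * (1 - s) * s * rH with hF
  have hDeq : ∀ s, Qf 1 (z s) = D s := fun s => by
    rw [hz]; simp only []
    rw [Qf_expand_real isHermitian_one, hu'1, hv1, ← he]; ring
  have hFeq : ∀ s, Qf H (z s) = F s := fun s => by
    rw [hz]; simp only []
    rw [Qf_expand_real hH, hHu', hHv, ← hrH]; ring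
  have hKeq : ∀ s, Qf K (z s) = 0 := fun s => by
    rw [hz]; simp only []
    rw [Qf_expand_real hK, hKu', hKv, hKcross]; ring
  have hDpos : ∀ s, 0 < D s := by
    intro s
    rcases lt_or_ge 0 (D s) with h | h
    · exact h
    exfalso
    have h0 : D s = 0 := le_antisymm h (by rw [← hDeq]; exact Qf_one_nonneg _)
    have hz0 : z s = 0 := eq_zero_of_Qf_one _ (by rw [hDeq, h0])
    have heq : ((1 - s : ℝ) : ℂ) • u' = -(((s : ℝ) : ℂ) • v) := by
      rw [← add_eq_zero_iff_eq_neg]; exact hz0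
    have hq1 : Qf H (((1 - s : ℝ) : ℂ) • u') = 0 := by
      rw [Qf_smul, hHu', mul_zero]
    have hq2 : Qf H (-(((s : ℝ) : ℂ) • v)) = s ^ 2 := by
      rw [← neg_smul, Qf_smul, hHv, mul_one]
      simp [Complex.normSq_ofReal, sq]
    have hs0 : s = 0 := by
      rw [heq, hq2] at hq1
      exact pow_eq_zero_iff two_ne_zero |>.mp hq1
    rw [hs0] at h0
    norm_num [hD] at h0
  have hcontF : Continuous F := by fun_prop
  have hcontD : Continuous D := by fun_prop
  set h : ℝ → ℝ := fun s => F s / D s with hh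
  have hcont : ContinuousOn h (Set.Icc 0 1) :=
    (hcontF.continuousOn).div hcontD.continuousOn fun s _ => (hDpos s).ne'
  have h0 : h 0 = 0 := by simp [hh, hF, hD]
  have h1 : h 1 = 1 := by norm_num [hh, hF, hD]
  have hsub := intermediate_value_Icc (by norm_num : (0:ℝ) ≤ 1) hcont
  rw [h0, h1] at hsub
  obtain ⟨s, _, hst⟩ := hsub ht
  have hsmul : ∀ P : Matrix ι ι ℂ, Qf P ((((Real.sqrt (D s))⁻¹ : ℝ) : ℂ) • z s)
      = (D s)⁻¹ * Qf P (z s) := by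
    intro P
    rw [Qf_smul, Complex.normSq_ofReal]
    congr 1
    rw [← Real.sqrt_inv, Real.mul_self_sqrt (inv_nonneg.mpr (hDpos s).le)]
  refine ⟨(((Real.sqrt (D s))⁻¹ : ℝ) : ℂ) • z s, ?_, ?_, ?_⟩
  · rw [hsmul, hDeq]
    exact inv_mul_cancel₀ (hDpos s).ne'
  · rw [hsmul, hFeq]
    rw [inv_mul_eq_div]
    exact hst
  · rw [hsmul, hKeq, mul_zero]
lemma Qf_zero (P : Matrix ι ι ℂ) : Qf P (0 : ι → ℂ) = 0 := by
  simp [Qf]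

lemma Qf_rescale (P : Matrix ι ι ℂ) (y : ι → ℂ) {r : ℝ} (hr : 0 ≤ r) :
    Qf P (((Real.sqrt r : ℝ) : ℂ) • y) = r * Qf P y := by
  rw [Qf_smul, Complex.normSq_ofReal, Real.mul_self_sqrt hr]

lemma nr_convex {M N : Matrix ι ι ℂ} (hM : M.IsHermitian) (hN : N.IsHermitian)
    (u v : ι → ℂ) (hu : Qf 1 u = 1) (hv : Qf 1 v = 1) {t : ℝ} (ht : t ∈ Set.Icc (0:ℝ) 1) :
    ∃ w, Qf 1 w = 1 ∧ Qf M w = (1 - t) * Qf M u + t * Qf M v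
      ∧ Qf N w = (1 - t) * Qf N u + t * Qf N v := by
  by_cases hsame : Qf M u = Qf M v ∧ Qf N u = Qf N v
  · exact ⟨u, hu, by rw [hsame.1]; ring, by rw [hsame.2]; ring⟩
  have hδ : 0 < (Qf M v - Qf M u) ^ 2 + (Qf N v - Qf N u) ^ 2 := by
    rcases not_and_or.mp hsame with h | h
    · have : Qf M v - Qf M u ≠ 0 := fun hc => h (by linarith)
      positivity
    · have : Qf N v - Qf N u ≠ 0 := fun hc => h (by linarith)
      positivity
  set δ1 : ℝ := Qf M v - Qf M u with hδ1
  set δ2 : ℝ := Qf N v - Qf N u with hδ2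
  set nrm : ℝ := δ1 ^ 2 + δ2 ^ 2 with hnrm
  set a : ℝ := δ1 / nrm with ha
  set b : ℝ := -δ2 / nrm with hb
  set M0 : Matrix ι ι ℂ := M - ((Qf M u : ℝ) : ℂ) • 1 with hM0
  set N0 : Matrix ι ι ℂ := N - ((Qf N u : ℝ) : ℂ) • 1 with hN0
  have hM0herm : M0.IsHermitian := hM.sub (herm_smul_real _ isHermitian_one)
  have hN0herm : N0.IsHermitian := hN.sub (herm_smul_real _ isHermitian_one)
  have hM0q : ∀ y, Qf M0 y = Qf M y - Qf M u * Qf 1 y := fun y => by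
    rw [hM0, Qf_matrix_sub, Qf_matrix_smul]
  have hN0q : ∀ y, Qf N0 y = Qf N y - Qf N u * Qf 1 y := fun y => by
    rw [hN0, Qf_matrix_sub, Qf_matrix_smul]
  set H' : Matrix ι ι ℂ := ((a : ℝ) : ℂ) • M0 - ((b : ℝ) : ℂ) • N0 with hH'
  set K' : Matrix ι ι ℂ := ((b : ℝ) : ℂ) • M0 + ((a : ℝ) : ℂ) • N0 with hK'
  have hH'herm : H'.IsHermitian :=
    (herm_smul_real _ hM0herm).sub (herm_smul_real _ hN0herm)
  have hK'herm : K'.IsHermitian :=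
    (herm_smul_real _ hM0herm).add (herm_smul_real _ hN0herm)
  have hH'q : ∀ y, Qf H' y = a * Qf M0 y - b * Qf N0 y := fun y => by
    rw [hH', Qf_matrix_sub, Qf_matrix_smul, Qf_matrix_smul]
  have hK'q : ∀ y, Qf K' y = b * Qf M0 y + a * Qf N0 y := fun y => by
    rw [hK', Qf_matrix_add, Qf_matrix_smul, Qf_matrix_smul]
  have hnrm0 : nrm ≠ 0 := hδ.ne'
  have hH'u : Qf H' u = 0 := by rw [hH'q, hM0q, hN0q, hu]; ring
  have hK'u : Qf K' u = 0 := by rw [hK'q, hM0q, hN0q, hu]; ring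
  have hH'v : Qf H' v = 1 := by
    rw [hH'q, hM0q, hN0q, hv, ha, hb]
    field_simp
    ring
  have hK'v : Qf K' v = 0 := by
    rw [hK'q, hM0q, hN0q, hv, ha, hb]
    field_simp
    ring
  obtain ⟨w, hw1, hwH, hwK⟩ := seg0 hH'herm hK'herm u v hu hv hH'u hK'u hH'v hK'v ht
  refine ⟨w, hw1, ?_, ?_⟩
  · -- Δ1 = t * δ1
    rw [hH'q, hM0q, hN0q, hw1, ha, hb] at hwH
    rw [hK'q, hM0q, hN0q, hw1, ha, hb] at hwK
    have eq1 : δ1 * (Qf M w - Qf M u) + δ2 * (Qf N w - Qf N u) = t * nrm := by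
      field_simp at hwH
      linarith [hwH]
    have eq2 : -δ2 * (Qf M w - Qf M u) + δ1 * (Qf N w - Qf N u) = 0 := by
      field_simp at hwK
      have h2 : (-δ2 * (Qf M w - Qf M u) + δ1 * (Qf N w - Qf N u)) * nrm = 0 := by
          have : -δ2 * (Qf M w - Qf M u) + δ1 * (Qf N w - Qf N u) = 0 := by linarith
          rw [this, zero_mul]
      rcases mul_eq_zero.mp h2 with h | h
      · exact h
      · exact absurd h hnrm0
    have key : nrm * (Qf M w - Qf M u) = nrm * (t * δ1) := by
      rw [hnrm]; linear_combination δ1 * eq1 - δ2 * eq2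
    have := mul_left_cancel₀ hnrm0 key
    rw [hδ1] at this
    linarith
  · rw [hH'q, hM0q, hN0q, hw1, ha, hb] at hwH
    rw [hK'q, hM0q, hN0q, hw1, ha, hb] at hwK
    have eq1 : δ1 * (Qf M w - Qf M u) + δ2 * (Qf N w - Qf N u) = t * nrm := by
      field_simp at hwH
      linarith [hwH]
    have eq2 : -δ2 * (Qf M w - Qf M u) + δ1 * (Qf N w - Qf N u) = 0 := by
      field_simp at hwK
      have h2 : (-δ2 * (Qf M w - Qf M u) + δ1 * (Qf N w - Qf N u)) * nrm = 0 := by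
          have : -δ2 * (Qf M w - Qf M u) + δ1 * (Qf N w - Qf N u) = 0 := by linarith
          rw [this, zero_mul]
      rcases mul_eq_zero.mp h2 with h | h
      · exact h
      · exact absurd h hnrm0
    have key : nrm * (Qf N w - Qf N u) = nrm * (t * δ2) := by
      rw [hnrm]; linear_combination δ2 * eq1 + δ1 * eq2
    have := mul_left_cancel₀ hnrm0 key
    rw [hδ2] at this
    linarith

lemma add_mem {M N : Matrix ι ι ℂ} (hM : M.IsHermitian) (hN : N.IsHermitian) (u v : ι → ℂ) :
    ∃ w, Qf M w = Qf M u + Qf M v ∧ Qf N w = Qf N u + Qf N v := by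
  rcases eq_or_lt_of_le (Qf_one_nonneg u) with hu | hu
  · have : u = 0 := eq_zero_of_Qf_one _ hu.symm
    subst this
    exact ⟨v, by rw [Qf_zero, zero_add], by rw [Qf_zero, zero_add]⟩
  rcases eq_or_lt_of_le (Qf_one_nonneg v) with hv | hv
  · have : v = 0 := eq_zero_of_Qf_one _ hv.symm
    subst this
    exact ⟨u, by rw [Qf_zero, add_zero], by rw [Qf_zero, add_zero]⟩
  set nu : ℝ := Qf 1 u with hnu
  set nv : ℝ := Qf 1 v with hnv
  set u1 := ((Real.sqrt nu⁻¹ : ℝ) : ℂ) • u with hu1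
  set v1 := ((Real.sqrt nv⁻¹ : ℝ) : ℂ) • v with hv1
  have hru : ∀ P : Matrix ι ι ℂ, Qf P u1 = nu⁻¹ * Qf P u := fun P =>
    Qf_rescale P u (inv_nonneg.mpr hu.le)
  have hrv : ∀ P : Matrix ι ι ℂ, Qf P v1 = nv⁻¹ * Qf P v := fun P =>
    Qf_rescale P v (inv_nonneg.mpr hv.le)
  have hu11 : Qf 1 u1 = 1 := by rw [hru, ← hnu, inv_mul_cancel₀ hu.ne']
  have hv11 : Qf 1 v1 = 1 := by rw [hrv, ← hnv, inv_mul_cancel₀ hv.ne']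
  have hsum : 0 < nu + nv := by linarith
  set t : ℝ := nv / (nu + nv) with htdef
  have ht : t ∈ Set.Icc (0:ℝ) 1 := by
    constructor
    · positivity
    · rw [htdef, div_le_one hsum]; linarith
  have h1t : 1 - t = nu / (nu + nv) := by rw [htdef]; field_simp; ring
  obtain ⟨w1, hw11, hwM, hwN⟩ := nr_convex hM hN u1 v1 hu11 hv11 ht
  refine ⟨((Real.sqrt (nu + nv) : ℝ) : ℂ) • w1, ?_, ?_⟩
  · rw [Qf_rescale _ _ hsum.le, hwM, hru, hrv, h1t, htdef]
    field_simp
  · rw [Qf_rescale _ _ hsum.le, hwN, hru, hrv, h1t, htdef]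
    field_simp

lemma homog {M N : Matrix ι ι ℂ} (hM : M.IsHermitian) (hN : N.IsHermitian)
    (y₀ : ι → ℂ) (h₀ : 0 < Qf M y₀) (himp : ∀ y, 0 ≤ Qf M y → 0 ≤ Qf N y) :
    ∃ lam : ℝ, 0 ≤ lam ∧ ∀ y, lam * Qf M y ≤ Qf N y := by
  set S : Set ℝ := {r : ℝ | ∃ y, Qf M y = 1 ∧ Qf N y = r} with hS
  have hne : S.Nonempty := by
    refine ⟨Qf N (((Real.sqrt (Qf M y₀)⁻¹ : ℝ) : ℂ) • y₀),
      ((Real.sqrt (Qf M y₀)⁻¹ : ℝ) : ℂ) • y₀, ?_, rfl⟩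
    rw [Qf_rescale _ _ (inv_nonneg.mpr h₀.le), inv_mul_cancel₀ h₀.ne']
  have hS0 : ∀ r ∈ S, (0:ℝ) ≤ r := by
    rintro r ⟨y, h1, h2⟩
    rw [← h2]
    exact himp y (by rw [h1]; norm_num)
  have hbdd : BddBelow S := ⟨0, hS0⟩
  set lam : ℝ := sInf S with hlam
  have hlam0 : 0 ≤ lam := le_csInf hne hS0
  refine ⟨lam, hlam0, fun y => ?_⟩
  rcases lt_trichotomy (Qf M y) 0 with hm | hm | hm
  · -- Qf M y < 0
    set s : ℝ := 1 - Qf M y with hs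
    have hspos : (0:ℝ) < s := by rw [hs]; linarith
    have claim : ∀ r ∈ S, (lam - Qf N y) / s ≤ r := by
      rintro r ⟨zv, hz1, hz2⟩
      set z' := ((Real.sqrt s : ℝ) : ℂ) • zv with hz'
      have hz'M : Qf M z' = s := by rw [hz', Qf_rescale _ _ hspos.le, hz1, mul_one]
      have hz'N : Qf N z' = s * r := by rw [hz', Qf_rescale _ _ hspos.le, hz2]
      obtain ⟨w, hwM, hwN⟩ := add_mem hM hN y z'
      have hwM1 : Qf M w = 1 := by rw [hwM, hz'M, hs]; ring
      have hin : Qf N w ∈ S := ⟨w, hwM1, rfl⟩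
      have hge : lam ≤ Qf N w := csInf_le hbdd hin
      rw [hwN, hz'N] at hge
      rw [div_le_iff₀ hspos]
      linarith
    have : (lam - Qf N y) / s ≤ lam := le_csInf hne claim
    rw [div_le_iff₀ hspos] at this
    rw [hs] at this
    nlinarith
  · rw [hm, mul_zero]
    exact himp y (by rw [hm])
  · -- Qf M y > 0
    set y' := ((Real.sqrt (Qf M y)⁻¹ : ℝ) : ℂ) • y with hy'
    have hy'M : Qf M y' = 1 := by
      rw [hy', Qf_rescale _ _ (inv_nonneg.mpr hm.le), inv_mul_cancel₀ hm.ne']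
    have hy'N : Qf N y' = (Qf M y)⁻¹ * Qf N y := by
      rw [hy', Qf_rescale _ _ (inv_nonneg.mpr hm.le)]
    have hin : Qf N y' ∈ S := ⟨y', hy'M, rfl⟩
    have := csInf_le hbdd hin
    rw [hy'N] at this
    rw [← hlam] at this
    calc lam * Qf M y ≤ ((Qf M y)⁻¹ * Qf N y) * Qf M y := by
          exact mul_le_mul_of_nonneg_right this hm.le
      _ = Qf N y := by field_simp

lemma psd_of_Qf {H : Matrix ι ι ℂ} (hH : H.IsHermitian) (h : ∀ y, 0 ≤ Qf H y) :
    H.PosSemidef := by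
  refine posSemidef_iff_dotProduct_mulVec.mpr ⟨hH, fun y => ?_⟩
  rw [Complex.nonneg_iff]
  refine ⟨h y, ?_⟩
  rw [form_real hH]
  simp

lemma Qf_of_psd {H : Matrix ι ι ℂ} (h : H.PosSemidef) (y : ι → ℂ) : 0 ≤ Qf H y :=
  (Complex.nonneg_iff.mp ((posSemidef_iff_dotProduct_mulVec.mp h).2 y)).1

lemma quad_coeff {a b c : ℝ} (h : ∀ r : ℝ, 0 ≤ r → 0 ≤ a * r ^ 2 + b * r + c) :
    0 ≤ a := by
  by_contra hc
  push_neg at hc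
  set r : ℝ := max 1 ((|b| + |c| + 1) / (-a)) with hr
  have hr1 : (1:ℝ) ≤ r := le_max_left _ _
  have hr2 : (|b| + |c| + 1) / (-a) ≤ r := le_max_right _ _
  have har : a * r ≤ -(|b| + |c| + 1) := by
    rw [div_le_iff₀ (neg_pos.mpr hc)] at hr2
    nlinarith
  have hh := h r (by linarith)
  nlinarith [le_abs_self b, le_abs_self c, neg_abs_le b, neg_abs_le c, abs_nonneg b,
    abs_nonneg c, mul_le_mul_of_nonneg_right har (by linarith : (0:ℝ) ≤ r)]

end SLemmaAux


/-- The `(n+1) × (n+1)` Hermitian block matrix `[[A, v], [vᴴ, s]]` built from an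
`n × n` block `A`, a column vector `v`, its conjugate-transposed row, and a real scalar `s`. -/
noncomputable def hermBlock {n : ℕ} (A : Matrix (Fin n) (Fin n) ℂ) (v : Fin n → ℂ) (s : ℝ) :
    Matrix (Fin n ⊕ Unit) (Fin n ⊕ Unit) ℂ :=
  Matrix.fromBlocks A (Matrix.of fun i (_ : Unit) => v i)
    (Matrix.of fun (_ : Unit) j => star (v j))
    (Matrix.of fun (_ : Unit) (_ : Unit) => (s : ℂ))


namespace SLemmaAux

variable {n : ℕ}

lemma hermBlock_isHermitian {A : Matrix (Fin n) (Fin n) ℂ} (hA : A.IsHermitian)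
    (v : Fin n → ℂ) (s : ℝ) : (hermBlock A v s).IsHermitian := by
  unfold Matrix.IsHermitian
  ext i j
  cases i <;> cases j <;>
    simp [hermBlock, Matrix.conjTranspose_apply, Matrix.fromBlocks, hA.apply]

lemma Qf_hermBlock (A : Matrix (Fin n) (Fin n) ℂ) (v : Fin n → ℂ) (s : ℝ)
    (x : Fin n → ℂ) (t : ℂ) :
    Qf (hermBlock A v s) (Sum.elim x fun _ : Unit => t)
      = (star x ⬝ᵥ A *ᵥ x).re + 2 * (star t * (star v ⬝ᵥ x)).re
        + Complex.normSq t * s := by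
  have hstar : star (Sum.elim x fun _ : Unit => t)
      = Sum.elim (star x) (fun _ : Unit => star t) := by
    funext i; cases i <;> rfl
  have h1 : (Matrix.of fun i (_ : Unit) => v i) *ᵥ (fun _ => t) = fun i => v i * t := by
    funext i; simp [Matrix.mulVec, dotProduct]
  have h2 : (Matrix.of fun (_ : Unit) j => star (v j)) *ᵥ x
      = fun _ : Unit => star v ⬝ᵥ x := by
    funext u; simp [Matrix.mulVec, dotProduct]
  have h3 : (Matrix.of fun (_ : Unit) (_ : Unit) => (s : ℂ)) *ᵥ (fun _ => t)
      = fun _ : Unit => (s : ℂ) * t := by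
    funext u; simp [Matrix.mulVec, dotProduct]
  unfold Qf hermBlock
  rw [hstar, fromBlocks_mulVec]
  simp only [Sum.elim_comp_inl, Sum.elim_comp_inr]
  rw [h1, h2, h3, sumElim_dotProduct_sumElim]
  have h4 : (star x ⬝ᵥ fun i => (A *ᵥ x) i + v i * t)
      = star x ⬝ᵥ A *ᵥ x + t * (star x ⬝ᵥ v) := by
    simp only [dotProduct, Pi.star_apply, Finset.mul_sum]
    rw [← Finset.sum_add_distrib]
    apply Finset.sum_congr rfl
    intros; simp [mul_add]; ring
  have h5 : ((fun _ : Unit => star t) ⬝ᵥ fun _ : Unit => star v ⬝ᵥ x + (s : ℂ) * t)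
      = star t * (star v ⬝ᵥ x) + star t * ((s : ℂ) * t) := by
    simp [dotProduct]; ring
  have h6 : star x ⬝ᵥ (A *ᵥ x + fun i => v i * t)
      = star x ⬝ᵥ A *ᵥ x + t * (star x ⬝ᵥ v) := by
    rw [← h4]; congr 1
  rw [show (A *ᵥ x + fun i => v i * t) = (fun i => (A *ᵥ x) i + v i * t) from rfl] at h6 ⊢
  rw [h6]
  rw [show ((fun _ : Unit => star v ⬝ᵥ x) + (fun _ : Unit => (s:ℂ) * t))
      = (fun _ : Unit => star v ⬝ᵥ x + (s : ℂ) * t) from rfl, h5]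
  have hconj : (t * (star x ⬝ᵥ v)).re = (star t * (star v ⬝ᵥ x)).re := by
    rw [star_dotProduct]
    have : t * star (star v ⬝ᵥ x) = star (star t * (star v ⬝ᵥ x)) := by
      rw [star_mul']
      simp
    rw [this, Complex.star_def, Complex.conj_re]
  have hlast : (star t * ((s : ℂ) * t)).re = Complex.normSq t * s := by
    have : star t * ((s : ℂ) * t) = ((Complex.normSq t * s : ℝ) : ℂ) := by
      rw [Complex.star_def]
      rw [show (starRingEnd ℂ) t * ((s:ℂ) * t) = (t * (starRingEnd ℂ) t) * (s:ℂ) by ring,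
        Complex.mul_conj]
      push_cast
      ring
    rw [this, Complex.ofReal_re]
  simp only [Complex.add_re, hconj, hlast]
  ring

lemma elim_scale {x : Fin n → ℂ} {t : ℂ} (ht : t ≠ 0) :
    (Sum.elim x fun _ : Unit => t) = t • Sum.elim (t⁻¹ • x) (fun _ : Unit => 1) := by
  funext i
  cases i with
  | inl i =>
      simp only [Sum.elim_inl, Pi.smul_apply, smul_eq_mul]
      field_simp
  | inr u =>
      simp [Pi.smul_apply]

lemma elim_self (y : Fin n ⊕ Unit → ℂ) :
    Sum.elim (fun i => y (Sum.inl i)) (fun _ : Unit => y (Sum.inr ())) = y := by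
  funext i
  cases i with
  | inl i => rfl
  | inr u => cases u; rfl

lemma real_smul_matrix (lam : ℝ) (A : Matrix (Fin n) (Fin n) ℂ) :
    lam • A = ((lam : ℂ)) • A := by
  ext i j
  simp [Complex.real_smul]

lemma hermBlock_sub (A B : Matrix (Fin n) (Fin n) ℂ) (b d : Fin n → ℂ)
    (lam c f : ℝ) :
    hermBlock (B - lam • A) (d - lam • b) (f - lam * c)
      = hermBlock B d f - ((lam : ℂ)) • hermBlock A b c := by
  ext i j
  cases i <;> cases j <;>
    simp [hermBlock, Matrix.fromBlocks, Matrix.sub_apply, Matrix.smul_apply,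
      Complex.real_smul, smul_eq_mul, star_mul', Complex.conj_ofReal]

end SLemmaAux

open SLemmaAux

/-- Hermitian S-lemma (S-procedure with one constraint, complex case).
With `g x = xᴴAx + 2 Re(bᴴx) + c` and `φ x = xᴴBx + 2 Re(dᴴx) + f`, under the Slater
condition `∃ x₀, g x₀ > 0`, one has `(∀ x, g x ≥ 0 → φ x ≥ 0)` iff there is `λ ≥ 0` with
`[[B − λA, d − λb], [(d − λb)ᴴ, f − λc]] ⪰ 0`. -/
theorem hermitian_s_lemma {n : ℕ} (hn : 1 ≤ n)
    (A B : Matrix (Fin n) (Fin n) ℂ) (hA : A.IsHermitian) (hB : B.IsHermitian)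
    (b d : Fin n → ℂ) (c f : ℝ)
    (g φ : (Fin n → ℂ) → ℝ)
    (hg : ∀ x, g x = (star x ⬝ᵥ A.mulVec x).re + 2 * (star b ⬝ᵥ x).re + c)
    (hφ : ∀ x, φ x = (star x ⬝ᵥ B.mulVec x).re + 2 * (star d ⬝ᵥ x).re + f)
    (hSlater : ∃ x₀ : Fin n → ℂ, 0 < g x₀) :
    (∀ x : Fin n → ℂ, 0 ≤ g x → 0 ≤ φ x) ↔
      ∃ lam : ℝ, 0 ≤ lam ∧
        (hermBlock (B - lam • A) (d - lam • b) (f - lam * c)).PosSemidef := by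
  obtain ⟨x₀, hx₀⟩ := hSlater
  set Mm := hermBlock A b c with hMm
  set Nm := hermBlock B d f with hNm
  have hMherm : Mm.IsHermitian := hermBlock_isHermitian hA b c
  have hNherm : Nm.IsHermitian := hermBlock_isHermitian hB d f
  have hgQ : ∀ x : Fin n → ℂ, Qf Mm (Sum.elim x fun _ : Unit => 1) = g x := by
    intro x
    rw [hMm, Qf_hermBlock, hg]
    simp
  have hφQ : ∀ x : Fin n → ℂ, Qf Nm (Sum.elim x fun _ : Unit => 1) = φ x := by
    intro x
    rw [hNm, Qf_hermBlock, hφ]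
    simp
  constructor
  · intro himp
    have hy₀ : 0 < Qf Mm (Sum.elim x₀ fun _ : Unit => 1) := by
      rw [hgQ]; exact hx₀
    have hhom : ∀ y, 0 ≤ Qf Mm y → 0 ≤ Qf Nm y := by
      intro y hy
      have hysplit : y = Sum.elim (fun i => y (Sum.inl i)) (fun _ : Unit => y (Sum.inr ())) :=
        (elim_self y).symm
      set x : Fin n → ℂ := fun i => y (Sum.inl i) with hxdef
      rcases eq_or_ne (y (Sum.inr ())) 0 with ht | ht
      · -- homogeneous part : last coordinate is zero
        have hy0 : y = Sum.elim x fun _ : Unit => (0 : ℂ) := by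
          rw [ht] at hysplit; exact hysplit
        have hQM : Qf Mm y = (star x ⬝ᵥ A *ᵥ x).re := by
          rw [hy0, hMm, Qf_hermBlock]; simp
        have hQN : Qf Nm y = (star x ⬝ᵥ B *ᵥ x).re := by
          rw [hy0, hNm, Qf_hermBlock]; simp
        rw [hQM] at hy
        rw [hQN]
        set α : ℝ := (star x ⬝ᵥ A *ᵥ x).re with hα
        set β : ℝ := (star x ⬝ᵥ B *ᵥ x).re with hβ
        set LA : ℝ := 2 * (star x₀ ⬝ᵥ A *ᵥ x).re + 2 * (star b ⬝ᵥ x).re with hLA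
        set LB : ℝ := 2 * (star x₀ ⬝ᵥ B *ᵥ x).re + 2 * (star d ⬝ᵥ x).re with hLB
        have hgexp : ∀ s : ℝ, g (x₀ + ((s : ℝ) : ℂ) • x) = α * s ^ 2 + LA * s + g x₀ := by
          intro s
          rw [hg, hg]
          have h1 : (star (x₀ + ((s : ℝ) : ℂ) • x) ⬝ᵥ A *ᵥ (x₀ + ((s : ℝ) : ℂ) • x)).re
              = Qf A (((1 : ℝ) : ℂ) • x₀ + ((s : ℝ) : ℂ) • x) := by
            rw [show (((1 : ℝ) : ℂ) • x₀) = x₀ by simp]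
            rfl
          rw [h1, Qf_expand_real hA]
          have h2 : star b ⬝ᵥ (x₀ + ((s : ℝ) : ℂ) • x)
              = star b ⬝ᵥ x₀ + ((s : ℝ) : ℂ) * (star b ⬝ᵥ x) := by
            rw [dotProduct_add, dotProduct_smul, smul_eq_mul]
          rw [h2]
          simp only [Complex.add_re, Complex.re_ofReal_mul]
          show (1:ℝ)^2 * Qf A x₀ + s ^ 2 * Qf A x + 2 * 1 * s * (star x₀ ⬝ᵥ A *ᵥ x).re
              + 2 * ((star b ⬝ᵥ x₀).re + s * (star b ⬝ᵥ x).re) + c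
            = α * s ^ 2 + LA * s + ((star x₀ ⬝ᵥ A *ᵥ x₀).re + 2 * (star b ⬝ᵥ x₀).re + c)
          rw [hLA, hα]
          show 1 ^ 2 * (star x₀ ⬝ᵥ A *ᵥ x₀).re + s ^ 2 * (star x ⬝ᵥ A *ᵥ x).re + _ + _ + c = _
          ring
        have hφexp : ∀ s : ℝ, φ (x₀ + ((s : ℝ) : ℂ) • x) = β * s ^ 2 + LB * s + φ x₀ := by
          intro s
          rw [hφ, hφ]
          have h1 : (star (x₀ + ((s : ℝ) : ℂ) • x) ⬝ᵥ B *ᵥ (x₀ + ((s : ℝ) : ℂ) • x)).re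
              = Qf B (((1 : ℝ) : ℂ) • x₀ + ((s : ℝ) : ℂ) • x) := by
            rw [show (((1 : ℝ) : ℂ) • x₀) = x₀ by simp]
            rfl
          rw [h1, Qf_expand_real hB]
          have h2 : star d ⬝ᵥ (x₀ + ((s : ℝ) : ℂ) • x)
              = star d ⬝ᵥ x₀ + ((s : ℝ) : ℂ) * (star d ⬝ᵥ x) := by
            rw [dotProduct_add, dotProduct_smul, smul_eq_mul]
          rw [h2]
          simp only [Complex.add_re, Complex.re_ofReal_mul]
          show (1:ℝ)^2 * Qf B x₀ + s ^ 2 * Qf B x + 2 * 1 * s * (star x₀ ⬝ᵥ B *ᵥ x).re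
              + 2 * ((star d ⬝ᵥ x₀).re + s * (star d ⬝ᵥ x).re) + f
            = β * s ^ 2 + LB * s + ((star x₀ ⬝ᵥ B *ᵥ x₀).re + 2 * (star d ⬝ᵥ x₀).re + f)
          rw [hLB, hβ]
          show 1 ^ 2 * (star x₀ ⬝ᵥ B *ᵥ x₀).re + s ^ 2 * (star x ⬝ᵥ B *ᵥ x).re + _ + _ + f = _
          ring
        set σ : ℝ := if 0 ≤ LA then 1 else -1 with hσ
        have hσsq : σ ^ 2 = 1 := by
          rw [hσ]; split_ifs <;> norm_num
        have hσLA : ∀ r : ℝ, 0 ≤ r → 0 ≤ σ * r * LA := by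
          intro r hr
          rcases le_or_gt 0 LA with h | h
          · have hs1 : σ = 1 := by rw [hσ, if_pos h]
            rw [hs1]
            nlinarith
          · have hs1 : σ = -1 := by rw [hσ, if_neg (not_le.mpr h)]
            rw [hs1]
            nlinarith
        apply quad_coeff (b := σ * LB) (c := φ x₀)
        intro r hr
        have hgr : 0 ≤ g (x₀ + ((σ * r : ℝ) : ℂ) • x) := by
          rw [hgexp]
          have h1 : α * (σ * r) ^ 2 = α * r ^ 2 := by
            rw [mul_pow, hσsq]; ring
          have h2 : LA * (σ * r) = σ * r * LA := by ring
          rw [h1, h2]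
          have := hσLA r hr
          nlinarith [mul_nonneg hy (sq_nonneg r)]
        have hβr := himp _ hgr
        rw [hφexp] at hβr
        have h3 : β * (σ * r) ^ 2 = β * r ^ 2 := by rw [mul_pow, hσsq]; ring
        have h4 : LB * (σ * r) = σ * LB * r := by ring
        rw [h3, h4] at hβr
        linarith
      · -- last coordinate nonzero
        have hy1 : y = y (Sum.inr ()) • Sum.elim ((y (Sum.inr ()))⁻¹ • x) (fun _ : Unit => 1) := by
          rw [hysplit]
          exact elim_scale ht
        have hsc : ∀ P : Matrix (Fin n ⊕ Unit) (Fin n ⊕ Unit) ℂ,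
            Qf P y = Complex.normSq (y (Sum.inr ()))
              * Qf P (Sum.elim ((y (Sum.inr ()))⁻¹ • x) fun _ : Unit => 1) := by
          intro P
          conv_lhs => rw [hy1]
          rw [Qf_smul]
        have hpos : 0 < Complex.normSq (y (Sum.inr ())) := by
          rwa [Complex.normSq_pos]
        rw [hsc, hgQ] at hy
        rw [hsc, hφQ]
        have hgge : 0 ≤ g ((y (Sum.inr ()))⁻¹ • x) := nonneg_of_mul_nonneg_right hy hpos
        exact mul_nonneg hpos.le (himp _ hgge)
    obtain ⟨lam, hlam, hineq⟩ := homog hMherm hNherm _ hy₀ hhom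
    refine ⟨lam, hlam, ?_⟩
    rw [hermBlock_sub]
    refine psd_of_Qf (hNherm.sub (herm_smul_real lam hMherm)) fun y => ?_
    rw [Qf_matrix_sub, Qf_matrix_smul]
    linarith [hineq y]
  · rintro ⟨lam, hlam, hpsd⟩ x hgx
    have h1 := Qf_of_psd hpsd (Sum.elim x fun _ : Unit => 1)
    rw [hermBlock_sub, Qf_matrix_sub, Qf_matrix_smul, hgQ, hφQ] at h1
    nlinarith
end

section
/- Robust lower-bound quadratic constraint as a linear matrix inequality (the Φ/Ψ-type block used in Lemma 1). Let n ≥ 1, let A and Q be n×n complex Hermitian matrices, let ĥ ∈ ℂⁿ, and let t ∈ ℝ. Then the infinite family of constraints (for every e ∈ ℂⁿ with eᴴQe ≤ 1, one has (ĥ + e)ᴴ A (ĥ + e) ≥ t) holds if and only if there exists λ ≥ 0 such that the (n+1)×(n+1) Hermitian block matrix [[A + λQ, Aĥ], [(Aĥ)ᴴ, ĥᴴAĥ − t − λ]] is positive semidefinite. (No extra hypothesis on Q is needed: the point e = 0 satisfies the constraint 0 ≤ 1 strictly, so the Slater condition for the S-lemma is automatic.) -/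
open Matrix ComplexOrder

namespace RobustAux
open Complex

variable {m : Type*} [Fintype m]

noncomputable def qf (M : Matrix m m ℂ) (x : m → ℂ) : ℝ := (star x ⬝ᵥ M.mulVec x).re

lemma conj_form (M : Matrix m m ℂ) (hM : M.IsHermitian) (x y : m → ℂ) :
    star y ⬝ᵥ M.mulVec x = starRingEnd ℂ (star x ⬝ᵥ M.mulVec y) := by
  have h1 : starRingEnd ℂ (star x ⬝ᵥ M.mulVec y) = star (star x ⬝ᵥ M.mulVec y) := rfl
  rw [h1, ← star_dotProduct_star, star_star, star_mulVec, dotProduct_mulVec, hM]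

lemma qf_eq {M : Matrix m m ℂ} (hM : M.IsHermitian) (x : m → ℂ) :
    star x ⬝ᵥ M.mulVec x = ((qf M x : ℝ) : ℂ) := by
  have h := conj_form M hM x x
  apply Complex.ext
  · simp [qf]
  · have h2 := congrArg Complex.im h
    simp only [Complex.conj_im] at h2
    simp [qf]
    linarith

lemma qf_smul (M : Matrix m m ℂ) (c : ℂ) (x : m → ℂ) :
    qf M (c • x) = normSq c * qf M x := by
  unfold qf
  rw [star_smul, mulVec_smul, smul_dotProduct, dotProduct_smul]
  simp only [smul_eq_mul, star_def]
  rw [show (starRingEnd ℂ c) * (c * (star x ⬝ᵥ M.mulVec x))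
      = (c * starRingEnd ℂ c) * (star x ⬝ᵥ M.mulVec x) by ring, Complex.mul_conj]
  exact Complex.re_ofReal_mul _ _

lemma qf_zero (M : Matrix m m ℂ) : qf M 0 = 0 := by simp [qf]

lemma qf_expand {M : Matrix m m ℂ} (hM : M.IsHermitian) (a b : ℂ) (x y : m → ℂ) :
    qf M (a • x + b • y) = normSq a * qf M x + normSq b * qf M y
      + 2 * (starRingEnd ℂ a * b * (star x ⬝ᵥ M.mulVec y)).re := by
  unfold qf
  set T := star x ⬝ᵥ M.mulVec y with hT
  have e1 : star y ⬝ᵥ M.mulVec x = starRingEnd ℂ T := conj_form M hM x y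
  have key : star (a • x + b • y) ⬝ᵥ M.mulVec (a • x + b • y)
      = ((normSq a * qf M x : ℝ) : ℂ) + ((normSq b * qf M y : ℝ) : ℂ)
        + ((starRingEnd ℂ a * b * T) + starRingEnd ℂ (starRingEnd ℂ a * b * T)) := by
    rw [star_add, star_smul, star_smul, mulVec_add, mulVec_smul, mulVec_smul,
      dotProduct_add, add_dotProduct, add_dotProduct]
    simp only [dotProduct_smul, smul_dotProduct, smul_eq_mul, star_def]
    rw [qf_eq hM x, qf_eq hM y, ← hT, e1]
    simp only [_root_.map_mul, Complex.conj_conj]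
    push_cast
    linear_combination (↑(qf M x) : ℂ) * Complex.mul_conj a + (↑(qf M y) : ℂ) * Complex.mul_conj b
  rw [key, Complex.add_conj]
  push_cast
  simp [qf]


lemma exists_dir (a b : ℂ) (d : ℝ × ℝ) (hd : d ≠ 0) :
    ∃ (w : ℂ) (c : ℝ), normSq w = 1 ∧ (w * a).re = c * d.1 ∧ (w * b).re = c * d.2 := by
  suffices h : ∃ (w0 : ℂ) (c0 : ℝ), w0 ≠ 0 ∧ (w0 * a).re = c0 * d.1 ∧ (w0 * b).re = c0 * d.2 by
    obtain ⟨w0, c0, hw0, ha0, hb0⟩ := h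
    have hn : 0 < normSq w0 := normSq_pos.2 hw0
    set r : ℝ := (Real.sqrt (normSq w0))⁻¹ with hr
    refine ⟨(r : ℂ) * w0, r * c0, ?_, ?_, ?_⟩
    · rw [normSq_mul, normSq_ofReal, hr, ← mul_inv,
        Real.mul_self_sqrt hn.le]
      exact inv_mul_cancel₀ hn.ne'
    · rw [mul_assoc, Complex.re_ofReal_mul, ha0]; ring
    · rw [mul_assoc, Complex.re_ofReal_mul, hb0]; ring
  set M2 : Matrix (Fin 2) (Fin 2) ℝ := !![a.re, -a.im; b.re, -b.im] with hM2
  by_cases hdet : M2.det = 0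
  · obtain ⟨v, hv0, hv⟩ := Matrix.exists_mulVec_eq_zero_iff.2 hdet
    have h0 := congrFun hv 0
    have h1 := congrFun hv 1
    simp [hM2, Matrix.mulVec, dotProduct, Fin.sum_univ_two] at h0 h1
    refine ⟨⟨v 0, v 1⟩, 0, ?_, ?_, ?_⟩
    · intro h
      have h1' := congrArg Complex.re h
      have h2' := congrArg Complex.im h
      simp at h1' h2'
      exact hv0 (funext fun i => by fin_cases i <;> simpa)
    · rw [Complex.mul_re]; simpa using by linarith
    · rw [Complex.mul_re]; simpa using by linarith
  · set u : Fin 2 → ℝ := M2⁻¹ *ᵥ ![d.1, d.2] with hu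
    have hMu : M2 *ᵥ u = ![d.1, d.2] := by
      rw [hu, Matrix.mulVec_mulVec, Matrix.mul_nonsing_inv _ (isUnit_iff_ne_zero.2 hdet),
        Matrix.one_mulVec]
    have h0 := congrFun hMu 0
    have h1 := congrFun hMu 1
    simp [hM2, Matrix.mulVec, dotProduct, Fin.sum_univ_two] at h0 h1
    refine ⟨⟨u 0, u 1⟩, 1, ?_, ?_, ?_⟩
    · intro h
      have h1' := congrArg Complex.re h
      have h2' := congrArg Complex.im h
      simp at h1' h2'
      apply hd
      have : M2 *ᵥ u = 0 := by
        have hu0 : u = 0 := funext fun i => by fin_cases i <;> simpa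
        rw [hu0, Matrix.mulVec_zero]
      rw [hMu] at this
      have d1 := congrFun this 0
      have d2 := congrFun this 1
      simp at d1 d2
      exact Prod.ext d1 d2
    · rw [Complex.mul_re]; simpa using by linarith
    · rw [Complex.mul_re]; simpa using by linarith

lemma dines (F G : Matrix m m ℂ) (hF : F.IsHermitian) (hG : G.IsHermitian) :
    Convex ℝ {p : ℝ × ℝ | ∃ x : m → ℂ, p = (qf F x, qf G x)} := by
  rintro p ⟨x, rfl⟩ q ⟨y, rfl⟩ s1 s2 hs1 hs2 hsum
  by_cases hpq : (qf F y, qf G y) = (qf F x, qf G x)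
  · rw [hpq, ← add_smul, hsum, one_smul]
    exact ⟨x, rfl⟩
  · have hd : ((qf F y, qf G y) : ℝ × ℝ) - (qf F x, qf G x) ≠ 0 := sub_ne_zero.2 hpq
    obtain ⟨w, c, hw, hwa, hwb⟩ :=
      exists_dir (star x ⬝ᵥ F.mulVec y) (star x ⬝ᵥ G.mulVec y) _ hd
    set φ : ℝ → ℝ := fun s => s + 2 * (Real.sqrt (1 - s) * Real.sqrt s) * c with hφ
    have hcont : ContinuousOn φ (Set.Icc 0 1) := by
      apply Continuous.continuousOn
      fun_prop
    have hmem : s2 ∈ Set.Icc (φ 0) (φ 1) := by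
      simp only [hφ]
      norm_num
      exact ⟨hs2, by linarith⟩
    obtain ⟨s, hs, hφs⟩ := intermediate_value_Icc zero_le_one hcont hmem
    have hs0 : (0:ℝ) ≤ s := hs.1
    have hs1' : s ≤ 1 := hs.2
    refine ⟨((Real.sqrt (1-s) : ℝ) : ℂ) • x + (((Real.sqrt s : ℝ) : ℂ) * w) • y, ?_⟩
    have hna : normSq ((Real.sqrt (1-s) : ℝ) : ℂ) = 1 - s := by
      rw [normSq_ofReal, Real.mul_self_sqrt (by linarith)]
    have hnb : normSq (((Real.sqrt s : ℝ) : ℂ) * w) = s := by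
      rw [normSq_mul, normSq_ofReal, Real.mul_self_sqrt hs0, hw, mul_one]
    have hconj : starRingEnd ℂ ((Real.sqrt (1-s) : ℝ) : ℂ) = ((Real.sqrt (1-s) : ℝ) : ℂ) :=
      Complex.conj_ofReal _
    have hcross : ∀ T : ℂ, (starRingEnd ℂ ((Real.sqrt (1-s) : ℝ) : ℂ)
        * (((Real.sqrt s : ℝ) : ℂ) * w) * T).re
        = (Real.sqrt (1-s) * Real.sqrt s) * (w * T).re := by
      intro T
      rw [hconj, show ((Real.sqrt (1-s) : ℝ) : ℂ) * (((Real.sqrt s : ℝ) : ℂ) * w) * T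
        = ((Real.sqrt (1-s) * Real.sqrt s : ℝ) : ℂ) * (w * T) by push_cast; ring,
        Complex.re_ofReal_mul]
    have eF : qf F (((Real.sqrt (1-s) : ℝ) : ℂ) • x + (((Real.sqrt s : ℝ) : ℂ) * w) • y)
        = (1-s) * qf F x + s * qf F y
          + (Real.sqrt (1-s) * Real.sqrt s) * (2 * (c * (qf F y - qf F x))) := by
      rw [qf_expand hF, hna, hnb, hcross, hwa]
      simp only [Prod.fst_sub]
      ring
    have eG : qf G (((Real.sqrt (1-s) : ℝ) : ℂ) • x + (((Real.sqrt s : ℝ) : ℂ) * w) • y)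
        = (1-s) * qf G x + s * qf G y
          + (Real.sqrt (1-s) * Real.sqrt s) * (2 * (c * (qf G y - qf G x))) := by
      rw [qf_expand hG, hna, hnb, hcross, hwb]
      simp only [Prod.snd_sub]
      ring
    have hK : s + 2 * (Real.sqrt (1 - s) * Real.sqrt s) * c = s2 := hφs
    have hs1eq : s1 = 1 - s2 := by linarith
    apply Prod.ext
    · simp only [Prod.fst_add, Prod.smul_fst, smul_eq_mul, eF]
      rw [hs1eq, ← hK]; ring
    · simp only [Prod.snd_add, Prod.smul_snd, smul_eq_mul, eG]
      rw [hs1eq, ← hK]; ring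

lemma cone_mem (F G : Matrix m m ℂ) (r : ℝ) (hr : 0 ≤ r) (x : m → ℂ) :
    ∃ z : m → ℂ, r * qf F x = qf F z ∧ r * qf G x = qf G z := by
  refine ⟨((Real.sqrt r : ℝ) : ℂ) • x, ?_, ?_⟩ <;>
    rw [qf_smul, normSq_ofReal, Real.mul_self_sqrt hr]


lemma quad_coeff_nonneg {a b c : ℝ} (h : ∀ r : ℝ, 0 ≤ a*r^2 + b*r + c) : 0 ≤ a := by
  by_contra ha
  push_neg at ha
  set r : ℝ := max 1 ((|b| + |c| + 1)/(-a)) with hr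
  have hr1 : 1 ≤ r := le_max_left _ _
  have hr2 : (|b| + |c| + 1)/(-a) ≤ r := le_max_right _ _
  have h3 : |b| + |c| + 1 ≤ r * (-a) := (div_le_iff₀ (by linarith)).1 hr2
  have h4 := h r
  nlinarith [le_abs_self b, neg_abs_le b, le_abs_self c, neg_abs_le c, abs_nonneg b, abs_nonneg c]

lemma slemma (F G : Matrix m m ℂ) (hF : F.IsHermitian) (hG : G.IsHermitian)
    (x0 : m → ℂ) (hx0 : 0 < qf G x0)
    (H : ∀ x, 0 ≤ qf G x → 0 ≤ qf F x) :
    ∃ lam : ℝ, 0 ≤ lam ∧ ∀ x, lam * qf G x ≤ qf F x := by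
  set W : Set (ℝ × ℝ) := {p | ∃ x : m → ℂ, p = (qf F x, qf G x)} with hW
  set K : Set (ℝ × ℝ) := {p | p.1 < 0} ∩ {p | 0 < p.2} with hK
  have hKopen : IsOpen K :=
    (isOpen_lt continuous_fst continuous_const).inter (isOpen_lt continuous_const continuous_snd)
  have hKconv : Convex ℝ K := by
    apply Convex.inter
    · intro p hp q hq a b ha hb hab
      simp only [Set.mem_setOf_eq, Prod.fst_add, Prod.smul_fst, smul_eq_mul] at *
      rcases eq_or_lt_of_le ha with rfl | ha'
      · simpa [show b = 1 by linarith] using hq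
      · nlinarith
    · intro p hp q hq a b ha hb hab
      simp only [Set.mem_setOf_eq, Prod.snd_add, Prod.smul_snd, smul_eq_mul] at *
      rcases eq_or_lt_of_le ha with rfl | ha'
      · simpa [show b = 1 by linarith] using hq
      · nlinarith
  have hdisj : Disjoint K W := by
    rw [Set.disjoint_right]
    rintro p ⟨x, rfl⟩ ⟨h1, h2⟩
    simp only [Set.mem_setOf_eq] at h1 h2
    exact absurd (H x h2.le) (not_le.2 h1)
  obtain ⟨f, u, hKlt, hWge⟩ := geometric_hahn_banach_open hKconv hKopen (dines F G hF hG) hdisj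
  have h0W : ((0:ℝ), (0:ℝ)) ∈ W := ⟨0, by simp [qf_zero]⟩
  have hu0 : u ≤ 0 := by
    have h := hWge _ h0W
    rwa [show ((0:ℝ), (0:ℝ)) = (0 : ℝ × ℝ) from rfl, map_zero] at h
  set P : ℝ := f (1, 0) with hP
  set Qc : ℝ := f (0, 1) with hQc
  have hrepr : ∀ p : ℝ × ℝ, f p = p.1 * P + p.2 * Qc := by
    intro p
    have hp : (p : ℝ × ℝ) = p.1 • ((1:ℝ), (0:ℝ)) + p.2 • ((0:ℝ), (1:ℝ)) := by
      ext <;> simp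
    calc f p = f (p.1 • ((1:ℝ), (0:ℝ)) + p.2 • ((0:ℝ), (1:ℝ))) := by rw [← hp]
      _ = p.1 * P + p.2 * Qc := by
          rw [map_add, _root_.map_smul, _root_.map_smul, smul_eq_mul, smul_eq_mul]
  have hKneg : ∀ a b : ℝ, a < 0 → 0 < b → a * P + b * Qc < 0 := by
    intro a b ha hb
    have := hKlt (a, b) ⟨ha, hb⟩
    rw [hrepr] at this
    exact lt_of_lt_of_le this hu0
  have hPnn : 0 ≤ P := by
    by_contra hP'
    push_neg at hP'
    have hQneg : Qc < 0 := by have := hKneg (-1) 1 (by norm_num) one_pos; linarith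
    have h2 := hKneg (-1) (P / (2 * Qc)) (by norm_num)
      (div_pos_of_neg_of_neg hP' (by linarith))
    have h3 : P / (2 * Qc) * Qc = P / 2 := by field_simp [hQneg.ne]
    rw [h3] at h2
    linarith
  have hQnp : Qc ≤ 0 := by
    by_contra hQ'
    push_neg at hQ'
    have hPpos : 0 < P := by have := hKneg (-1) 1 (by norm_num) one_pos; linarith
    have h2 := hKneg (-(Qc / (2 * P))) 1
      (by have : 0 < Qc / (2 * P) := div_pos hQ' (by linarith); linarith) one_pos
    have h3 : -(Qc / (2 * P)) * P = -(Qc / 2) := by field_simp [hPpos.ne']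
    rw [h3] at h2
    linarith
  have hWpos : ∀ x : m → ℂ, 0 ≤ qf F x * P + qf G x * Qc := by
    intro x
    set c0 : ℝ := qf F x * P + qf G x * Qc with hc0
    by_contra hc
    push_neg at hc
    set r : ℝ := (|u| + 1) / (-c0) with hr
    have hrpos : 0 < r := div_pos (by positivity) (by linarith)
    obtain ⟨z, hz1, hz2⟩ := cone_mem F G r hrpos.le x
    have hzW : ((r * qf F x, r * qf G x) : ℝ × ℝ) ∈ W := ⟨z, by rw [hz1, hz2]⟩
    have := hWge _ hzW
    rw [hrepr] at this
    simp only at this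
    have hrc : r * c0 = -(|u| + 1) := by
      rw [hr]; field_simp [hc.ne]
    nlinarith [neg_abs_le u, abs_nonneg u]
  have hPpos : 0 < P := by
    rcases eq_or_lt_of_le hPnn with hP0 | h
    · exfalso
      have hQneg : Qc < 0 := by
        have := hKneg (-1) 1 (by norm_num) one_pos; rw [← hP0] at this; linarith
      have := hWpos x0
      rw [← hP0] at this
      nlinarith
    · exact h
  refine ⟨-Qc / P, div_nonneg (neg_nonneg.2 hQnp) hPpos.le, ?_⟩
  intro x
  have hlP : -Qc / P * P = -Qc := by field_simp
  by_contra hcon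
  push_neg at hcon
  have h4 : -Qc / P * P * qf G x = -Qc * qf G x := by rw [hlP]
  nlinarith [hWpos x, mul_pos hPpos (sub_pos.2 hcon)]


lemma qf_add_smul {n' : Type*} [Fintype n'] (A Q : Matrix n' n' ℂ) (lam : ℝ) (e : n' → ℂ) :
    qf (A + lam • Q) e = qf A e + lam * qf Q e := by
  unfold qf
  rw [Matrix.add_mulVec, dotProduct_add, Complex.add_re]
  congr 1
  rw [Matrix.smul_mulVec, dotProduct_smul, Complex.real_smul, Complex.re_ofReal_mul]

lemma qf_neg {n' : Type*} [Fintype n'] (Q : Matrix n' n' ℂ) (e : n' → ℂ) :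
    qf (-Q) e = -qf Q e := by
  unfold qf
  rw [Matrix.neg_mulVec, dotProduct_neg, Complex.neg_re]


lemma hermBlock_isHermitian {n : ℕ} {B : Matrix (Fin n) (Fin n) ℂ} (hB : B.IsHermitian)
    (v : Fin n → ℂ) (s : ℝ) : (hermBlock B v s).IsHermitian := by
  apply Matrix.IsHermitian.fromBlocks hB
  · ext u j
    simp [Matrix.conjTranspose_apply]
  · ext u u'
    simp [Matrix.IsHermitian, Matrix.conjTranspose_apply, Complex.conj_ofReal]

lemma qf_hermBlock {n : ℕ} (B : Matrix (Fin n) (Fin n) ℂ) (v : Fin n → ℂ) (s : ℝ)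
    (x : Fin n ⊕ Unit → ℂ) :
    qf (hermBlock B v s) x
      = qf B (x ∘ Sum.inl)
        + 2 * ((x (Sum.inr ())) * (star (x ∘ Sum.inl) ⬝ᵥ v)).re
        + s * Complex.normSq (x (Sum.inr ())) := by
  set e : Fin n → ℂ := x ∘ Sum.inl with he
  set c : ℂ := x (Sum.inr ()) with hc
  set z : ℂ := star e ⬝ᵥ v with hz
  have hx : star x = Sum.elim (star e) (star (x ∘ Sum.inr)) := by
    funext i; cases i <;> rfl
  unfold qf hermBlock
  rw [Matrix.fromBlocks_mulVec, hx, sumElim_dotProduct_sumElim]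
  have h12 : (Matrix.of fun i (_ : Unit) => v i) *ᵥ (x ∘ Sum.inr) = c • v := by
    funext i
    simp [Matrix.mulVec, dotProduct, mul_comm, ← hc]
  have h21 : (Matrix.of fun (_ : Unit) j => star (v j)) *ᵥ e = fun _ => star z := by
    funext u
    show star v ⬝ᵥ e = star z
    rw [hz, star_dotProduct]
  have h22 : (Matrix.of fun (_ : Unit) (_ : Unit) => (s : ℂ)) *ᵥ (x ∘ Sum.inr)
      = fun _ => (s : ℂ) * c := by
    funext u
    simp [Matrix.mulVec, dotProduct, ← hc]
  rw [h12, h21, h22]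
  have hdot2 : star (x ∘ Sum.inr) ⬝ᵥ (((fun _ => star z) : Unit → ℂ) + fun _ => (s:ℂ) * c)
      = star c * star z + star c * ((s:ℂ) * c) := by
    simp [dotProduct, mul_add, ← hc]
  rw [hdot2, dotProduct_add, dotProduct_smul, smul_eq_mul, ← hz]
  have h1 : star c * star z = star (c * z) := (star_mul' c z).symm
  have h2 : star c * ((s:ℂ) * c) = ((s * Complex.normSq c : ℝ) : ℂ) := by
    rw [show star c * ((s:ℂ) * c) = (s:ℂ) * (c * star c) by ring, Complex.star_def,
      Complex.mul_conj]
    push_cast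
    ring
  rw [h1, h2]
  simp only [Complex.add_re, Complex.ofReal_re]
  rw [Complex.star_def, Complex.conj_re]
  ring

end RobustAux

open RobustAux in
/-- Robust lower-bound quadratic constraint as an LMI (the Φ/Ψ-type block of Lemma 1):
`(ĥ + e)ᴴ A (ĥ + e) ≥ t` for all errors `e` with `eᴴQe ≤ 1` iff there is `λ ≥ 0` such that
`[[A + λQ, Aĥ], [(Aĥ)ᴴ, ĥᴴAĥ − t − λ]] ⪰ 0`. -/
theorem robust_lower_bound_lmi {n : ℕ} (hn : 1 ≤ n)
    (A Q : Matrix (Fin n) (Fin n) ℂ) (hA : A.IsHermitian) (hQ : Q.IsHermitian)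
    (hhat : Fin n → ℂ) (t : ℝ) :
    (∀ e : Fin n → ℂ, (star e ⬝ᵥ Q.mulVec e).re ≤ 1 →
        t ≤ (star (hhat + e) ⬝ᵥ A.mulVec (hhat + e)).re) ↔
      ∃ lam : ℝ, 0 ≤ lam ∧
        (hermBlock (A + lam • Q) (A.mulVec hhat)
          ((star hhat ⬝ᵥ A.mulVec hhat).re - t - lam)).PosSemidef := by
  have hf0 : qf A hhat = (star hhat ⬝ᵥ A.mulVec hhat).re := rfl
  set f0 : ℝ := (star hhat ⬝ᵥ A.mulVec hhat).re with hf0def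
  have hexp : ∀ (a : ℂ) (e : Fin n → ℂ), qf A (hhat + a • e)
      = f0 + Complex.normSq a * qf A e + 2 * (a * (star hhat ⬝ᵥ A.mulVec e)).re := by
    intro a e
    have h1 : hhat + a • e = (1:ℂ) • hhat + a • e := by rw [one_smul]
    rw [h1, qf_expand hA 1 a hhat e]
    simp only [_root_.map_one, one_mul, Complex.normSq_one]
    rw [hf0]
  have hsym : ∀ e : Fin n → ℂ, star e ⬝ᵥ A.mulVec hhat
      = starRingEnd ℂ (star hhat ⬝ᵥ A.mulVec e) := fun e => conj_form A hA hhat e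
  constructor
  · -- hard direction: S-procedure
    intro H
    set F : Matrix (Fin n ⊕ Unit) (Fin n ⊕ Unit) ℂ := hermBlock A (A.mulVec hhat) (f0 - t)
      with hFdef
    set G : Matrix (Fin n ⊕ Unit) (Fin n ⊕ Unit) ℂ := hermBlock (-Q) 0 1 with hGdef
    have hFh : F.IsHermitian := hermBlock_isHermitian hA _ _
    have hGh : G.IsHermitian := hermBlock_isHermitian hQ.neg _ _
    have qfG : ∀ x, qf G x = Complex.normSq (x (Sum.inr ())) - qf Q (x ∘ Sum.inl) := by
      intro x
      rw [hGdef, qf_hermBlock, qf_neg]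
      simp only [dotProduct_zero, mul_zero, Complex.zero_re, one_mul]
      ring
    have qfF : ∀ x, qf F x = qf A (x ∘ Sum.inl)
        + 2 * ((x (Sum.inr ())) * (star (x ∘ Sum.inl) ⬝ᵥ A.mulVec hhat)).re
        + (f0 - t) * Complex.normSq (x (Sum.inr ())) := fun x => by rw [hFdef, qf_hermBlock]
    have Hhom : ∀ x, 0 ≤ qf G x → 0 ≤ qf F x := by
      intro x hx
      rw [qfG] at hx
      rw [qfF]
      set e : Fin n → ℂ := x ∘ Sum.inl with he
      set c : ℂ := x (Sum.inr ()) with hc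
      by_cases hc0 : c = 0
      · have hQe : qf Q e ≤ 0 := by rw [hc0] at hx; simpa using hx
        have key : ∀ r : ℝ, 0 ≤ qf A e * r^2
            + (2 * (star hhat ⬝ᵥ A.mulVec e).re) * r + (f0 - t) := by
          intro r
          have hcon : (star ((r:ℂ) • e) ⬝ᵥ Q.mulVec ((r:ℂ) • e)).re ≤ 1 := by
            show qf Q ((r:ℂ) • e) ≤ 1
            rw [qf_smul, Complex.normSq_ofReal]
            nlinarith [mul_self_nonneg r]
          have h2 : t ≤ qf A (hhat + (r:ℂ) • e) := H ((r:ℂ) • e) hcon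
          rw [hexp (r:ℂ) e, Complex.normSq_ofReal, Complex.re_ofReal_mul] at h2
          nlinarith [h2]
        have h5 := quad_coeff_nonneg key
        rw [hc0]
        simp only [Complex.normSq_zero, mul_zero, zero_mul, Complex.zero_re, add_zero]
        linarith
      · have hnc : 0 < Complex.normSq c := Complex.normSq_pos.2 hc0
        have hcon : (star (c⁻¹ • e) ⬝ᵥ Q.mulVec (c⁻¹ • e)).re ≤ 1 := by
          show qf Q (c⁻¹ • e) ≤ 1
          rw [qf_smul, Complex.normSq_inv]
          rw [inv_mul_le_iff₀ hnc, mul_one]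
          linarith
        have h2 : t ≤ qf A (hhat + c⁻¹ • e) := H (c⁻¹ • e) hcon
        rw [hexp c⁻¹ e, Complex.normSq_inv] at h2
        set T : ℂ := star hhat ⬝ᵥ A.mulVec e with hT
        have h1c : ((Complex.normSq c : ℝ) : ℂ) * c⁻¹ = starRingEnd ℂ c := by
          rw [← Complex.mul_conj, mul_comm c, mul_assoc, mul_inv_cancel₀ hc0, mul_one]
        have hkey : (c * (star e ⬝ᵥ A.mulVec hhat)).re
            = Complex.normSq c * (c⁻¹ * T).re := by
          rw [hsym e, ← hT]
          have e1 : c * starRingEnd ℂ T = starRingEnd ℂ (starRingEnd ℂ c * T) := by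
            rw [_root_.map_mul, Complex.conj_conj]
          rw [e1, Complex.conj_re, ← h1c, mul_assoc, Complex.re_ofReal_mul]
        rw [hkey]
        have h6 : Complex.normSq c * ((Complex.normSq c)⁻¹ * qf A e) = qf A e := by
          field_simp
        nlinarith [mul_le_mul_of_nonneg_left h2 hnc.le, h6]
    set x0 : Fin n ⊕ Unit → ℂ := Sum.elim (0 : Fin n → ℂ) fun _ => (1:ℂ) with hx0
    have slater : 0 < qf G x0 := by
      rw [qfG]
      have h1 : x0 ∘ Sum.inl = (0 : Fin n → ℂ) := rfl
      have h2 : x0 (Sum.inr ()) = 1 := rfl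
      rw [h1, h2, qf_zero]
      norm_num
    obtain ⟨lam, hlam, hineq⟩ := slemma F G hFh hGh _ slater Hhom
    have hMh : (hermBlock (A + lam • Q) (A.mulVec hhat) (f0 - t - lam)).IsHermitian := by
      apply hermBlock_isHermitian
      show (A + lam • Q)ᴴ = A + lam • Q
      rw [conjTranspose_add, conjTranspose_smul, star_trivial, hA.eq, hQ.eq]
    refine ⟨lam, hlam, posSemidef_iff_dotProduct_mulVec.2 ⟨hMh, ?_⟩⟩
    intro x
    rw [qf_eq hMh x, Complex.zero_le_real]
    have h7 := hineq x
    rw [qfF, qfG] at h7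
    rw [qf_hermBlock, qf_add_smul]
    nlinarith [h7]
  · -- easy direction
    rintro ⟨lam, hlam, hherm, hpos⟩ e he
    set x : Fin n ⊕ Unit → ℂ := Sum.elim e (fun _ => (1:ℂ)) with hxdef
    have hre : 0 ≤ qf (hermBlock (A + lam • Q) (A.mulVec hhat) (f0 - t - lam)) x :=
      (Complex.le_def.1 ((posSemidef_iff_dotProduct_mulVec.1 ⟨hherm, hpos⟩).2 x)).1
    rw [qf_hermBlock, qf_add_smul] at hre
    have hxl : x ∘ Sum.inl = e := rfl
    have hxr : x (Sum.inr ()) = 1 := rfl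
    rw [hxl, hxr] at hre
    simp only [one_mul, Complex.normSq_one, mul_one] at hre
    have hcr : (star e ⬝ᵥ A.mulVec hhat).re = (star hhat ⬝ᵥ A.mulVec e).re := by
      rw [hsym e, Complex.conj_re]
    rw [hcr] at hre
    show t ≤ qf A (hhat + e)
    have h8 : hhat + e = hhat + (1:ℂ) • e := by rw [one_smul]
    rw [h8, hexp 1 e]
    simp only [Complex.normSq_one, one_mul]
    have he' : qf Q e ≤ 1 := he
    nlinarith [mul_nonneg hlam (sub_nonneg.2 he'), hre]
end

section
/- Key step in the proof of Lemma 2 (rank-one optimality of the SDR solution via KKT complementary slackness). Let n ≥ 1, let c ∈ ℝ, let h ∈ ℂⁿ, and set Z = Iₙ − c·(h hᴴ). Let W be an n×n complex Hermitian positive semidefinite matrix with W ≠ 0. If Z·W = 0 (complementary slackness), then rank(W) = 1; moreover h ≠ 0, c·‖h‖² = 1, and there exists a real number β > 0 such that W = β·(h hᴴ). -/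
open Matrix ComplexOrder

/-- Key step in the proof of Lemma 2 (rank-one optimality of the SDR solution via KKT
complementary slackness): if `Z = Iₙ − c·(h hᴴ)`, `W ⪰ 0`, `W ≠ 0`, and `Z·W = 0`, then
`rank W = 1`; moreover `h ≠ 0`, `c·‖h‖² = 1`, and `W = β·(h hᴴ)` for some real `β > 0`. -/
theorem sdr_rank_one_optimality {n : ℕ} (hn : 1 ≤ n) (c : ℝ) (h : Fin n → ℂ)
    (Z W : Matrix (Fin n) (Fin n) ℂ)
    (hZ : Z = 1 - c • Matrix.vecMulVec h (star h))
    (hW : W.PosSemidef) (hW0 : W ≠ 0) (hZW : Z * W = 0) :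
    W.rank = 1 ∧ h ≠ 0 ∧ c * (∑ i, ‖h i‖ ^ 2) = 1 ∧
      ∃ β : ℝ, 0 < β ∧ W = β • Matrix.vecMulVec h (star h) := by
  subst hZ
  set v : Fin n → ℂ := fun j => (c : ℂ) * ∑ k, (starRingEnd ℂ) (h k) * W k j with hv
  have hWeq : ∀ i j, W i j = h i * v j := by
    intro i j
    have := congrFun (congrFun hZW i) j
    simp only [Matrix.mul_apply, Matrix.sub_apply, Matrix.smul_apply, Matrix.one_apply,
      Matrix.vecMulVec_apply, Pi.star_apply, sub_mul, Finset.sum_sub_distrib, ite_mul, one_mul,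
      zero_mul, Finset.sum_ite_eq, Finset.mem_univ, if_true, Matrix.zero_apply, sub_eq_zero,
      smul_eq_mul] at this
    rw [this, hv]
    simp only [Finset.mul_sum]
    refine Finset.sum_congr rfl fun k _ => ?_
    simp only [Complex.real_smul, Complex.star_def]
    ring
  have hh0 : h ≠ 0 := by
    rintro rfl
    apply hW0
    ext i j
    simp [hWeq i j]
  have hv0 : v ≠ 0 := by
    intro hv'
    apply hW0
    ext i j
    rw [hWeq i j, hv']
    simp
  obtain ⟨i₀, hi₀⟩ := Function.ne_iff.mp hh0
  obtain ⟨j₀, hj₀⟩ := Function.ne_iff.mp hv0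
  simp only [Pi.zero_apply] at hi₀ hj₀
  have hmc : ∀ k, h k * (starRingEnd ℂ) (h k) = ((‖h k‖ ^ 2 : ℝ) : ℂ) := by
    intro k
    rw [Complex.mul_conj, Complex.normSq_eq_norm_sq]
  -- c * ∑ ‖h k‖² = 1 (complex version)
  have hS : (c : ℂ) * ∑ k, ((‖h k‖ ^ 2 : ℝ) : ℂ) = 1 := by
    have h1 : v j₀ = ((c : ℂ) * ∑ k, ((‖h k‖ ^ 2 : ℝ) : ℂ)) * v j₀ := by
      conv_lhs => rw [hv]
      simp only
      rw [Finset.mul_sum, Finset.mul_sum, Finset.sum_mul]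
      refine Finset.sum_congr rfl fun k _ => ?_
      rw [hWeq k j₀, ← hmc k]
      ring
    have h2 := sub_eq_zero.mpr h1.symm
    rw [← sub_one_mul] at h2
    rcases mul_eq_zero.mp h2 with h' | h'
    · exact sub_eq_zero.mp h'
    · exact absurd h' hj₀
  have hSreal : c * (∑ i, ‖h i‖ ^ 2) = 1 := by
    have : ((c * ∑ i, ‖h i‖ ^ 2 : ℝ) : ℂ) = 1 := by push_cast; push_cast at hS; exact hS
    exact_mod_cast this
  -- Hermitian structure
  have hHerm : ∀ i j, (starRingEnd ℂ) (h j) * (starRingEnd ℂ) (v i) = h i * v j := by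
    intro i j
    have := congrFun (congrFun hW.1 i) j
    rw [Matrix.conjTranspose_apply, hWeq j i, hWeq i j] at this
    simpa [_root_.map_mul] using this
  set α : ℂ := (starRingEnd ℂ) (v i₀) / h i₀ with hα
  have hvα : ∀ i, v i = α * (starRingEnd ℂ) (h i) := by
    intro i
    have h3 := hHerm i₀ i
    rw [hα, div_mul_eq_mul_div, eq_comm, div_eq_iff hi₀]
    linear_combination h3
  have hα0 : α ≠ 0 := by
    intro h'
    exact hj₀ (by rw [hvα j₀, h', zero_mul])
  have hdiag : 0 ≤ W i₀ i₀ := by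
    have := hW.dotProduct_mulVec_nonneg (Pi.single i₀ 1)
    simpa [dotProduct, Matrix.mulVec, Pi.single_apply, Finset.sum_ite_eq',
      Finset.mul_sum] using this
  have hWii : W i₀ i₀ = α * ((‖h i₀‖ ^ 2 : ℝ) : ℂ) := by
    rw [hWeq i₀ i₀, hvα i₀, ← hmc i₀]
    ring
  have hnorm : (0:ℝ) < ‖h i₀‖ ^ 2 := pow_pos (norm_pos_iff.mpr hi₀) 2
  rw [hWii, Complex.nonneg_iff] at hdiag
  obtain ⟨h1, h2⟩ := hdiag
  rw [Complex.mul_im, Complex.ofReal_re, Complex.ofReal_im, mul_zero, zero_add] at h2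
  rw [Complex.mul_re, Complex.ofReal_re, Complex.ofReal_im, mul_zero, sub_zero] at h1
  have him : α.im = 0 := by
    rcases mul_eq_zero.mp h2.symm with h' | h'
    · exact h'
    · exact absurd h' hnorm.ne'
  have hαeq : α = (α.re : ℂ) := Complex.ext (by simp) (by simp [him])
  have hre : 0 < α.re := by
    refine lt_of_le_of_ne ((mul_nonneg_iff_of_pos_right hnorm).mp h1) ?_
    intro h'
    apply hα0
    rw [hαeq, ← h']
    simp
  have hWfinal : W = (α.re : ℝ) • Matrix.vecMulVec h (star h) := by
    ext i j
    rw [hWeq i j, hvα j]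
    simp only [Matrix.smul_apply, Matrix.vecMulVec_apply, Pi.star_apply, Complex.star_def,
      Complex.real_smul]
    rw [← hαeq]
    ring
  refine ⟨?_, hh0, hSreal, α.re, hre, hWfinal⟩
  have hrle : W.rank ≤ 1 := by
    have hcr : W = Matrix.replicateCol (Fin 1) h * Matrix.replicateRow (Fin 1) v := by
      refine Eq.trans ?_ (Matrix.vecMulVec_eq (Fin 1) h v)
      ext i j
      exact hWeq i j
    calc W.rank ≤ (Matrix.replicateCol (Fin 1) h).rank := by rw [hcr]; exact Matrix.rank_mul_le_left _ _
    _ ≤ Fintype.card (Fin 1) := Matrix.rank_le_card_width _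
    _ = 1 := by simp
  have hrne : W.rank ≠ 0 := by
    intro h0
    rw [Matrix.rank, Submodule.finrank_eq_zero] at h0
    have hmem : (W *ᵥ Pi.single j₀ 1) ∈ LinearMap.range W.mulVecLin := ⟨Pi.single j₀ 1, rfl⟩
    rw [h0, Submodule.mem_bot] at hmem
    have := congrFun hmem i₀
    simp only [Matrix.mulVec, dotProduct, Pi.single_apply, mul_ite, mul_one, mul_zero,
      Finset.sum_ite_eq', Finset.mem_univ, if_true, Pi.zero_apply] at this
    rw [hWeq i₀ j₀] at this
    exact mul_ne_zero hi₀ hj₀ this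
  omega
end
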